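/- Let A be a connected access structure realized by the polymatroid f on {s}∪P. If i ∈ P satisfies f({i}) = f({s}), then f is tight at i, i.e. f(M) = f(M∖{i}) where M = {s}∪P. -/
import Mathlib


/-- The polymatroid rank function `f` on ground set `{s} ∪ P` realizes the access
structure `𝒜 ⊆ 2^P`. -/
def Realizes {α : Type*} [DecidableEq α] (s : α) (P : Finset α) (𝒜 : Set (Finset α))
    (f : Finset α → ℝ) : Prop :=
  ∀ A : Finset α, A ⊆ P →
    (A ∈ 𝒜 ↔ f (insert s A) = f A) ∧ (A ∉ 𝒜 ↔ f (insert s A) = f A + f {s})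

/-- In a realization of a connected access structure, any participant whose share
has the same size as the secret is tight. -/
theorem minimal_share_is_tight {α : Type*} [DecidableEq α] (s : α) (P : Finset α)
    (hs : s ∉ P) (𝒜 : Set (Finset α)) (f : Finset α → ℝ)
    (hempty : f ∅ = 0)
    (hnonneg : ∀ A, A ⊆ insert s P → 0 ≤ f A)
    (hmono : ∀ A B : Finset α, A ⊆ B → B ⊆ insert s P → f A ≤ f B)
    (hsub : ∀ A B : Finset α, A ⊆ insert s P → B ⊆ insert s P →
        f (A ∪ B) + f (A ∩ B) ≤ f A + f B)
    (hreal : Realizes s P 𝒜 f)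
    (hconn : ∀ i ∈ P, ∃ B : Finset α, B ⊆ P \ {i} ∧ B ∉ 𝒜 ∧ insert i B ∈ 𝒜)
    (i : α) (hi : i ∈ P) (hshare : f {i} = f {s}) :
    f (insert s P) = f (insert s P \ {i}) := by
  obtain ⟨B, hBsub, hBno, hBi⟩ := hconn i hi
  have hBP : B ⊆ P := hBsub.trans Finset.sdiff_subset
  have hiB : i ∉ B := fun h => (Finset.mem_sdiff.mp (hBsub h)).2 (Finset.mem_singleton_self i)
  have hsi : s ≠ i := fun h => hs (h ▸ hi)
  have hBM : B ⊆ insert s P := hBP.trans (Finset.subset_insert _ _)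
  have hiM : i ∈ insert s P := Finset.mem_insert_of_mem hi
  have h1 : f (insert s B) = f B + f {s} := ((hreal B hBP).2).mp hBno
  have h2 : f (insert s (insert i B)) = f (insert i B) :=
    ((hreal (insert i B) (Finset.insert_subset hi hBP)).1).mp hBi
  have hsBM : insert s B ⊆ insert s P := Finset.insert_subset_insert _ hBP
  have hsiBM : insert s (insert i B) ⊆ insert s P :=
    Finset.insert_subset_insert _ (Finset.insert_subset hi hBP)
  -- f (insert i B) ≤ f B + f {s}
  have hsub1 := hsub {i} B (Finset.singleton_subset_iff.mpr hiM) hBM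
  have hun : ({i} : Finset α) ∪ B = insert i B := by
    ext x; simp [Finset.mem_insert]
  have hin : ({i} : Finset α) ∩ B = ∅ := by
    ext x; simp only [Finset.mem_inter, Finset.mem_singleton, Finset.notMem_empty, iff_false]
    rintro ⟨rfl, hx⟩; exact hiB hx
  rw [hun, hin, hempty, add_zero, hshare] at hsub1
  -- f (insert s B) ≤ f (insert s (insert i B))
  have hm1 : f (insert s B) ≤ f (insert s (insert i B)) :=
    hmono _ _ (Finset.insert_subset_insert _ (Finset.subset_insert _ _)) hsiBM
  have hkey : f (insert s (insert i B)) = f (insert s B) := by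
    have : f (insert s (insert i B)) ≤ f (insert s B) := by
      rw [h2, h1]; linarith
    linarith
  -- final submodularity
  have hfin := hsub (insert s P \ {i}) (insert s (insert i B))
    (Finset.sdiff_subset.trans (le_refl _)) hsiBM
  have hU : (insert s P \ {i}) ∪ insert s (insert i B) = insert s P := by
    ext x
    by_cases hx : x = i
    · subst hx
      simp [hiM, hiB]
    · simp only [Finset.mem_union, Finset.mem_sdiff, Finset.mem_singleton, Finset.mem_insert]
      constructor
      · rintro (⟨h, _⟩ | (rfl | rfl | h))
        · exact h
        · exact Or.inl rfl
        · exact absurd rfl hx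
        · exact Or.inr (hBP h)
      · intro h; exact Or.inl ⟨h, hx⟩
  have hI : (insert s P \ {i}) ∩ insert s (insert i B) = insert s B := by
    ext x
    simp only [Finset.mem_inter, Finset.mem_sdiff, Finset.mem_singleton, Finset.mem_insert]
    constructor
    · rintro ⟨⟨_, hxi⟩, (rfl | rfl | h)⟩
      · exact Or.inl rfl
      · exact absurd rfl hxi
      · exact Or.inr h
    · rintro (rfl | h)
      · exact ⟨⟨Or.inl rfl, hsi⟩, Or.inl rfl⟩
      · exact ⟨⟨Or.inr (hBP h), fun he => hiB (he ▸ h)⟩, Or.inr (Or.inr h)⟩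
  rw [hU, hI, hkey] at hfin
  have hm2 : f (insert s P \ {i}) ≤ f (insert s P) :=
    hmono _ _ Finset.sdiff_subset (le_refl _)
  linarith
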